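/- Let G be a finite connected graph and let E be a Θ*-class of G. If x, y ∈ V(G), P is a shortest x,y-path in G and Q is an arbitrary x,y-path in G, then |E(Q) ∩ E| ≥ |E(P) ∩ E|. -/

import Mathlib

open SimpleGraph

variable {V : Type*}

/-- The Djoković–Winkler relation Θ on edges of `G`:
`e₁ = u₁v₁` and `e₂ = u₂v₂` are in relation Θ if
`d(u₁,u₂) + d(v₁,v₂) ≠ d(u₁,v₂) + d(v₁,u₂)`. -/
def djokovicWinkler (G : SimpleGraph V) (e₁ e₂ : Sym2 V) : Prop :=
  e₁ ∈ G.edgeSet ∧ e₂ ∈ G.edgeSet ∧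
    ∃ u₁ v₁ u₂ v₂, e₁ = s(u₁, v₁) ∧ e₂ = s(u₂, v₂) ∧
      G.dist u₁ u₂ + G.dist v₁ v₂ ≠ G.dist u₁ v₂ + G.dist v₁ u₂

/-- Θ*, the transitive closure of the relation Θ. -/
def thetaStar (G : SimpleGraph V) : Sym2 V → Sym2 V → Prop :=
  Relation.TransGen (djokovicWinkler G)

/-- `E` is a Θ*-class of `G`: the equivalence class under Θ* of some edge of `G`. -/
def IsThetaStarClass (G : SimpleGraph V) (E : Set (Sym2 V)) : Prop :=
  ∃ e₀ ∈ G.edgeSet, E = {e | e = e₀ ∨ thetaStar G e₀ e}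

/- ### Auxiliary material -/

attribute [local instance] Classical.propDecidable

namespace ThetaAux

variable {G : SimpleGraph V} {E : Set (Sym2 V)}

lemma dw_symm {e f : Sym2 V} (h : djokovicWinkler G e f) : djokovicWinkler G f e := by
  obtain ⟨h1, h2, u, v, a, b, rfl, rfl, hne⟩ := h
  refine ⟨h2, h1, a, b, u, v, rfl, rfl, fun hc => hne ?_⟩
  have c1 : G.dist a u = G.dist u a := dist_comm
  have c2 : G.dist b v = G.dist v b := dist_comm
  have c3 : G.dist a v = G.dist v a := dist_comm
  have c4 : G.dist b u = G.dist u b := dist_comm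
  omega

lemma mem_class_of_dw (hE : IsThetaStarClass G E) {e f : Sym2 V}
    (he : e ∈ E) (h : djokovicWinkler G e f) : f ∈ E := by
  obtain ⟨e₀, -, rfl⟩ := hE
  rcases he with rfl | he
  · exact Or.inr (Relation.TransGen.single h)
  · exact Or.inr (he.tail h)

/-- The (integer) crossing quantity between two darts. -/
noncomputable def delta (G : SimpleGraph V) (e g : G.Dart) : ℤ :=
  (((G.dist e.fst g.snd : ℤ) - (G.dist e.snd g.snd : ℤ))
    - ((G.dist e.fst g.fst : ℤ) - (G.dist e.snd g.fst : ℤ)))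

lemma delta_flip (e g : G.Dart) :
    delta G e g = ((G.dist g.fst e.snd : ℤ) - (G.dist g.snd e.snd : ℤ))
      - ((G.dist g.fst e.fst : ℤ) - (G.dist g.snd e.fst : ℤ)) := by
  have c1 : G.dist g.fst e.snd = G.dist e.snd g.fst := dist_comm
  have c2 : G.dist g.snd e.snd = G.dist e.snd g.snd := dist_comm
  have c3 : G.dist g.fst e.fst = G.dist e.fst g.fst := dist_comm
  have c4 : G.dist g.snd e.fst = G.dist e.fst g.snd := dist_comm
  simp only [delta]
  omega

lemma delta_dw {e g : G.Dart} (h : delta G e g ≠ 0) : djokovicWinkler G e.edge g.edge := by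
  refine ⟨e.edge_mem, g.edge_mem, e.fst, e.snd, g.fst, g.snd, rfl, rfl, fun hc => h ?_⟩
  simp only [delta]
  omega

/-- membership transfer through a nonzero crossing. -/
lemma mem_of_delta (hE : IsThetaStarClass G E) {e g : G.Dart}
    (he : e.edge ∈ E) (h : delta G e g ≠ 0) : g.edge ∈ E :=
  mem_class_of_dw hE he (delta_dw h)

lemma mem_of_delta' (hE : IsThetaStarClass G E) {e g : G.Dart}
    (hg : g.edge ∈ E) (h : delta G e g ≠ 0) : e.edge ∈ E :=
  mem_class_of_dw hE hg (dw_symm (delta_dw h))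

/-- Telescoping a potential along the darts of a walk. -/
lemma telescope {u v : V} (W : G.Walk u v) (h : V → ℤ) :
    (W.darts.map (fun d => h d.snd - h d.fst)).sum = h v - h u := by
  induction W with
  | nil => simp
  | cons hadj p ih =>
    rw [Walk.darts_cons, List.map_cons, List.sum_cons, ih]
    ring

lemma sum_map_add {α : Type*} (l : List α) (f g : α → ℤ) :
    (l.map (fun x => f x + g x)).sum = (l.map f).sum + (l.map g).sum := by
  induction l with
  | nil => simp
  | cons a l ih => simp only [List.map_cons, List.sum_cons, ih]; ring

lemma sum_swap {α β : Type*} (l1 : List α) (l2 : List β) (f : α → β → ℤ) :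
    (l1.map (fun a => (l2.map (f a)).sum)).sum
      = (l2.map (fun b => (l1.map (fun a => f a b)).sum)).sum := by
  induction l1 with
  | nil => simp
  | cons a l ih =>
    rw [List.map_cons, List.sum_cons, ih]
    simp only [List.map_cons, List.sum_cons]
    rw [sum_map_add l2 (fun b => f a b) (fun b => (l.map (fun a => f a b)).sum)]

lemma sum_filter_of_zero {α : Type*} (l : List α) (p : α → Prop) [DecidablePred p] (f : α → ℤ)
    (h : ∀ a ∈ l, ¬ p a → f a = 0) :
    ((l.filter (fun a => p a)).map f).sum = (l.map f).sum := by
  induction l with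
  | nil => simp
  | cons a l ih =>
    by_cases hp : p a
    · have hfil : (a :: l).filter (fun x => p x) = a :: l.filter (fun x => p x) := by
        simp [List.filter_cons, hp]
      rw [hfil, List.map_cons, List.map_cons, List.sum_cons, List.sum_cons,
        ih (fun b hb => h b (List.mem_cons_of_mem _ hb))]
    · have hfil : (a :: l).filter (fun x => p x) = l.filter (fun x => p x) := by
        simp [List.filter_cons, hp]
      rw [hfil, List.map_cons, List.sum_cons, h a List.mem_cons_self hp, zero_add,
        ih (fun b hb => h b (List.mem_cons_of_mem _ hb))]

lemma sum_le_sum' {α : Type*} (l : List α) (f g : α → ℤ) (h : ∀ a ∈ l, f a ≤ g a) :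
    (l.map f).sum ≤ (l.map g).sum := by
  induction l with
  | nil => simp
  | cons a l ih =>
    simp only [List.map_cons, List.sum_cons]
    exact add_le_add (h a List.mem_cons_self)
      (ih (fun b hb => h b (List.mem_cons_of_mem _ hb)))

lemma sum_const_two {α : Type*} (l : List α) (f : α → ℤ) (h : ∀ a ∈ l, f a = 2) :
    (l.map f).sum = 2 * l.length := by
  induction l with
  | nil => simp
  | cons a l ih =>
    simp only [List.map_cons, List.sum_cons, h a List.mem_cons_self,
      ih (fun b hb => h b (List.mem_cons_of_mem _ hb)), List.length_cons]
    push_cast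
    ring

lemma sum_ite_two {α : Type*} (l : List α) (p : α → Prop) [DecidablePred p] :
    (l.map (fun a => if p a then (2:ℤ) else 0)).sum
      = 2 * ((l.filter (fun a => p a)).length : ℤ) := by
  induction l with
  | nil => simp
  | cons a l ih =>
    by_cases hp : p a
    · have hfil : (a :: l).filter (fun x => p x) = a :: l.filter (fun x => p x) := by
        simp [List.filter_cons, hp]
      rw [List.map_cons, List.sum_cons, if_pos hp, hfil, List.length_cons, ih]
      push_cast
      ring
    · have hfil : (a :: l).filter (fun x => p x) = l.filter (fun x => p x) := by
        simp [List.filter_cons, hp]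
      rw [List.map_cons, List.sum_cons, if_neg hp, hfil, ih, zero_add]

/-- position facts for darts on a walk. -/
lemma dart_pos (hG : G.Connected) {u v : V} (W : G.Walk u v) :
    ∀ e ∈ W.darts, G.dist u e.fst + 1 + G.dist e.snd v ≤ W.length := by
  induction W with
  | nil => simp
  | @cons u w v hadj p ih =>
    intro e he
    rw [Walk.darts_cons, List.mem_cons] at he
    rcases he with rfl | he
    · have := dist_le p
      rw [Walk.length_cons]
      simp only [dist_self]
      omega
    · have h1 := ih e he
      have h2 : G.dist u e.fst ≤ G.dist u w + G.dist w e.fst := hG.dist_triangle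
      have h3 : G.dist u w ≤ 1 := by simpa using dist_le (Walk.cons hadj Walk.nil)
      rw [Walk.length_cons]
      omega

lemma adj_dist_le {a b : V} (h : G.Adj a b) : G.dist a b ≤ 1 := by
  simpa using dist_le (Walk.cons h Walk.nil)

/-- Distance equalities for a dart of a shortest walk. -/
lemma dart_dists (hG : G.Connected) {x y : V} {P : G.Walk x y}
    (hPmin : P.length = G.dist x y) {e : G.Dart} (he : e ∈ P.darts) :
    G.dist x e.snd = G.dist x e.fst + 1 ∧ G.dist e.fst y = G.dist e.snd y + 1 := by
  have h1 := dart_pos hG P e he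
  rw [hPmin] at h1
  have t1 : G.dist x y ≤ G.dist x e.fst + G.dist e.fst y := hG.dist_triangle
  have t2 : G.dist e.fst y ≤ G.dist e.fst e.snd + G.dist e.snd y := hG.dist_triangle
  have t3 : G.dist x y ≤ G.dist x e.snd + G.dist e.snd y := hG.dist_triangle
  have t4 : G.dist x e.snd ≤ G.dist x e.fst + G.dist e.fst e.snd := hG.dist_triangle
  have t5 : G.dist e.fst e.snd ≤ 1 := adj_dist_le e.adj
  omega

end ThetaAux

open ThetaAux in
/-- Let `G` be a finite connected graph and `E` a Θ*-class of `G`.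
If `P` is a shortest `x,y`-path and `Q` an arbitrary `x,y`-path, then
`|E(Q) ∩ E| ≥ |E(P) ∩ E|`. -/
theorem card_edges_inter_thetaStarClass_ge [Fintype V] (G : SimpleGraph V)
    (hG : G.Connected) (E : Set (Sym2 V)) (hE : IsThetaStarClass G E)
    (x y : V) (P Q : G.Walk x y) (hP : P.IsPath) (hPmin : P.length = G.dist x y)
    (hQ : Q.IsPath) :
    ({e | e ∈ Q.edges} ∩ E).ncard ≥ ({e | e ∈ P.edges} ∩ E).ncard := by
  classical
  -- reduce set cardinalities to lengths of filtered dart lists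
  have card_eq : ∀ (W : G.Walk x y), W.IsPath →
      ({e | e ∈ W.edges} ∩ E).ncard
        = (W.darts.filter (fun d => d.edge ∈ E)).length := by
    intro W hW
    have hnd : W.edges.Nodup := hW.isTrail.edges_nodup
    have hset : {e | e ∈ W.edges} ∩ E = ↑((W.edges.filter (fun e => e ∈ E)).toFinset) := by
      ext a
      simp [List.mem_filter, Set.mem_inter_iff]
    rw [hset, Set.ncard_coe_finset, List.toFinset_card_of_nodup (hnd.filter _)]
    have hedges : W.edges = W.darts.map SimpleGraph.Dart.edge := rfl
    rw [hedges, List.filter_map, List.length_map]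
    rfl
  rw [card_eq P hP, card_eq Q hQ]
  -- the key combinatorial inequality between dart counts
  have key : ((P.darts.filter (fun d => d.edge ∈ E)).length : ℤ)
      ≤ ((Q.darts.filter (fun d => d.edge ∈ E)).length : ℤ) := by
    have hA : ∀ e ∈ P.darts.filter (fun d => d.edge ∈ E),
        (Q.darts.map (delta G e)).sum = 2 := by
      intro e he
      have he' : e ∈ P.darts := List.mem_of_mem_filter he
      obtain ⟨hd1, hd2⟩ := dart_dists hG hPmin he'
      have hre : (Q.darts.map (delta G e)).sum
          = ((G.dist e.fst y : ℤ) - G.dist e.snd y)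
            - ((G.dist e.fst x : ℤ) - G.dist e.snd x) :=
        telescope Q (fun w => (G.dist e.fst w : ℤ) - (G.dist e.snd w : ℤ))
      rw [hre]
      have c1 : G.dist e.fst x = G.dist x e.fst := dist_comm
      have c2 : G.dist e.snd x = G.dist x e.snd := dist_comm
      omega
    have S1 : ((P.darts.filter (fun d => d.edge ∈ E)).map
        (fun e => (Q.darts.map (delta G e)).sum)).sum
        = 2 * ((P.darts.filter (fun d => d.edge ∈ E)).length : ℤ) :=
      sum_const_two _ _ hA
    have S2 : ((P.darts.filter (fun d => d.edge ∈ E)).map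
        (fun e => (Q.darts.map (delta G e)).sum)).sum
        = (Q.darts.map (fun g => ((P.darts.filter (fun d => d.edge ∈ E)).map
            (fun e => delta G e g)).sum)).sum :=
      sum_swap _ _ _
    have hB : ∀ g ∈ Q.darts,
        ((P.darts.filter (fun d => d.edge ∈ E)).map (fun e => delta G e g)).sum
          ≤ (if g.edge ∈ E then (2:ℤ) else 0) := by
      intro g hg
      by_cases hgE : g.edge ∈ E
      · rw [if_pos hgE]
        have hfull : ((P.darts.filter (fun d => d.edge ∈ E)).map (fun e => delta G e g)).sum
            = (P.darts.map (fun e => delta G e g)).sum := by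
          apply sum_filter_of_zero
          intro e he hne
          by_contra h0
          exact hne (mem_of_delta' hE hgE h0)
        rw [hfull]
        have hmc : P.darts.map (fun e => delta G e g)
            = P.darts.map (fun d => ((G.dist g.fst d.snd : ℤ) - (G.dist g.snd d.snd : ℤ))
              - ((G.dist g.fst d.fst : ℤ) - (G.dist g.snd d.fst : ℤ))) :=
          List.map_congr_left (fun d _ => delta_flip d g)
        have heq : (P.darts.map (fun e => delta G e g)).sum
            = ((G.dist g.fst y : ℤ) - G.dist g.snd y)
              - ((G.dist g.fst x : ℤ) - G.dist g.snd x) := by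
          rw [hmc]
          exact telescope P (fun w => (G.dist g.fst w : ℤ) - (G.dist g.snd w : ℤ))
        rw [heq]
        have l1 : G.dist g.fst y ≤ G.dist g.fst g.snd + G.dist g.snd y := hG.dist_triangle
        have l2 : G.dist g.snd x ≤ G.dist g.snd g.fst + G.dist g.fst x := hG.dist_triangle
        have l3 : G.dist g.fst g.snd ≤ 1 := adj_dist_le g.adj
        have l4 : G.dist g.snd g.fst ≤ 1 := adj_dist_le g.adj.symm
        omega
      · rw [if_neg hgE]
        have hzero : ((P.darts.filter (fun d => d.edge ∈ E)).map
            (fun e => delta G e g)).sum = 0 := by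
          apply List.sum_eq_zero
          intro b hb
          obtain ⟨e, he, rfl⟩ := List.mem_map.mp hb
          by_contra h0
          have heE : e.edge ∈ E := by
            have := List.of_mem_filter he
            simpa using this
          exact hgE (mem_of_delta hE heE h0)
        rw [hzero]
    have S3 : (Q.darts.map (fun g => ((P.darts.filter (fun d => d.edge ∈ E)).map
          (fun e => delta G e g)).sum)).sum
        ≤ (Q.darts.map (fun g => if g.edge ∈ E then (2:ℤ) else 0)).sum :=
      sum_le_sum' _ _ _ hB
    have S4 : (Q.darts.map (fun g => if g.edge ∈ E then (2:ℤ) else 0)).sum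
        = 2 * ((Q.darts.filter (fun d => d.edge ∈ E)).length : ℤ) :=
      sum_ite_two _ _
    have chain : 2 * ((P.darts.filter (fun d => d.edge ∈ E)).length : ℤ)
        ≤ 2 * ((Q.darts.filter (fun d => d.edge ∈ E)).length : ℤ) := by
      rw [← S1, S2, ← S4]
      exact S3
    omega
  exact_mod_cast key
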